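/- Let q be a prime power, k ≥ 1, Δ = (q^k − 1)/(q − 1), γ a primitive element of F_{q^k}, and let e₁, e₂, α, β be integers with 0 ≤ α < q^k − 1, 0 ≤ β < q − 1 and e₂·α + Δ·β ≡ 1 (mod q^k − 1). Set d = gcd(q − 1, k·e₁ − e₂) and let ρ be the integer with d·ρ = Δ·(e₁·α + β) − 1 (d divides Δ·(e₁·α + β) − 1). For a, b ∈ F_{q^k} define f(v, w) = a·γ^{Δ(e₁α+β)v + Δ·d·w} + b·γ^{v} for integers v, w (integer powers of the unit γ). Then for all integers v, w, r and for every t ∈ {0, 1, …, d − 1}: (1) γ^{rΔ}·f(v, w) = f((v + rΔ) % (q^k − 1), (w − rρ) % (q − 1)), and (2) f(v, w) = f(v, (w + ((q−1)/d)·t) % (q − 1)). -/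

import Mathlib

/-- Invariance properties of the function
`f(v, w) = a·γ^{Δ(e₁α+β)v + Δ·d·w} + b·γ^{v}` (Lemma 6 of the paper). -/
theorem f_invariance
    (q k : ℕ) (hk : 1 ≤ k)
    (F E : Type*) [Field F] [Fintype F] [Field E] [Fintype E] [Algebra F E]
    (hq : 2 ≤ q) (hcard : Fintype.card F = q) (hE : Fintype.card E = q ^ k)
    (γ : Eˣ) (hγ : ∀ x : Eˣ, x ∈ Subgroup.zpowers γ)
    (Δ e₁ e₂ α β : ℤ) (hΔ : Δ * ((q : ℤ) - 1) = (q : ℤ) ^ k - 1)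
    (hα : 0 ≤ α ∧ α < (q : ℤ) ^ k - 1) (hβ : 0 ≤ β ∧ β < (q : ℤ) - 1)
    (hcong : e₂ * α + Δ * β ≡ 1 [ZMOD (q : ℤ) ^ k - 1])
    (d : ℤ) (hd : d = (Int.gcd ((q : ℤ) - 1) ((k : ℤ) * e₁ - e₂) : ℤ))
    (ρ : ℤ) (hρ : d * ρ = Δ * (e₁ * α + β) - 1)
    (a b : E) (f : ℤ → ℤ → E)
    (hf : ∀ v w : ℤ,
      f v w = a * ((γ ^ (Δ * (e₁ * α + β) * v + Δ * d * w) : Eˣ) : E) + b * ((γ ^ v : Eˣ) : E)) :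
    ∀ v w r : ℤ, ∀ t : ℤ, 0 ≤ t → t < d →
      ((γ ^ (r * Δ) : Eˣ) : E) * f v w
          = f ((v + r * Δ) % ((q : ℤ) ^ k - 1)) ((w - r * ρ) % ((q : ℤ) - 1)) ∧
        f v w = f v ((w + (((q : ℤ) - 1) / d) * t) % ((q : ℤ) - 1)) := by
  intro v w r t ht htd
  letI := Classical.decEq E
  have hγN : γ ^ ((q : ℤ) ^ k - 1) = 1 := by
    have h1 : γ ^ Fintype.card Eˣ = 1 := pow_card_eq_one
    have hc : Fintype.card Eˣ = q ^ k - 1 := by rw [Fintype.card_units, hE]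
    have hcast : ((q ^ k - 1 : ℕ) : ℤ) = (q : ℤ) ^ k - 1 := by
      have h2 : 1 ≤ q ^ k := Nat.one_le_pow _ _ (by omega)
      push_cast [h2]
      ring
    rw [← hcast, zpow_natCast, ← hc, h1]
  have key : ∀ m n : ℤ, ((q : ℤ) ^ k - 1) ∣ (m - n) → γ ^ m = γ ^ n := by
    rintro m n ⟨s, hs⟩
    have hm : m = n + ((q : ℤ) ^ k - 1) * s := by linarith
    rw [hm, zpow_add, zpow_mul, hγN, one_zpow, mul_one]
  have hdQ : d ∣ (q : ℤ) - 1 := hd ▸ Int.gcd_dvd_left _ _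
  have hdQ' : d * (((q : ℤ) - 1) / d) = (q : ℤ) - 1 := Int.mul_ediv_cancel' hdQ
  set N : ℤ := (q : ℤ) ^ k - 1 with hN
  set Q : ℤ := (q : ℤ) - 1 with hQ
  have hv : (v + r * Δ) % N = v + r * Δ - N * ((v + r * Δ) / N) := Int.emod_def _ _
  have hw : (w - r * ρ) % Q = w - r * ρ - Q * ((w - r * ρ) / Q) := Int.emod_def _ _
  have hw2 : (w + (Q / d) * t) % Q = w + (Q / d) * t - Q * ((w + (Q / d) * t) / Q) :=
    Int.emod_def _ _
  set q1 := (v + r * Δ) / N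
  set q2 := (w - r * ρ) / Q
  set q3 := (w + (Q / d) * t) / Q
  constructor
  · rw [hf, hf]
    have e1 : ((γ ^ (r * Δ) : Eˣ) : E) * ((γ ^ (Δ * (e₁ * α + β) * v + Δ * d * w) : Eˣ) : E)
        = ((γ ^ (Δ * (e₁ * α + β) * ((v + r * Δ) % N) + Δ * d * ((w - r * ρ) % Q)) : Eˣ) : E) := by
      rw [← Units.val_mul, ← zpow_add]
      congr 1
      apply key
      refine ⟨Δ * (e₁ * α + β) * q1 + d * q2, ?_⟩
      linear_combination (-(Δ * (e₁ * α + β))) * hv + (-(Δ * d)) * hw + (r * Δ) * hρ +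
        (d * q2) * hΔ
    have e2 : ((γ ^ (r * Δ) : Eˣ) : E) * ((γ ^ v : Eˣ) : E)
        = ((γ ^ ((v + r * Δ) % N) : Eˣ) : E) := by
      rw [← Units.val_mul, ← zpow_add]
      congr 1
      apply key
      exact ⟨q1, by linear_combination -hv⟩
    linear_combination a * e1 + b * e2
  · rw [hf, hf]
    have e3 : ((γ ^ (Δ * (e₁ * α + β) * v + Δ * d * w) : Eˣ) : E)
        = ((γ ^ (Δ * (e₁ * α + β) * v + Δ * d * ((w + (Q / d) * t) % Q)) : Eˣ) : E) := by
      congr 1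
      apply key
      refine ⟨d * q3 - t, ?_⟩
      linear_combination (-(Δ * d)) * hw2 + (-(Δ * t)) * hdQ' + (d * q3 - t) * hΔ
    linear_combination a * e3
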